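/- Let 0 < ρ ≤ 1/4, 1 ≤ h ≤ 1/(2ρ), and let v be a complex number with |v| = 1 and Re v ≥ T(h) = √(1 + ρ² − 2ρ/h). Then for every real x in the segment S(h) = [x₋, x₊], where x₊ = (√(h² − 2ρh + ρ²h²) + (1 − ρh))/(h+1) and x₋ = (√(h² − 2ρh + ρ²h²) − (1 − ρh))/(h+1), the Poisson kernel satisfies P(v;x) ≥ h. -/

import Mathlib

set_option maxHeartbeats 1000000

open Real Set

theorem stmt3 (ρ : ℝ) (hρ0 : 0 < ρ) (hρ1 : ρ ≤ 1 / 4) (h : ℝ) (hh1 : 1 ≤ h)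
    (hh2 : h ≤ 1 / (2 * ρ)) (v : ℂ) (hv : ‖v‖ = 1)
    (hRe : Real.sqrt (1 + ρ ^ 2 - 2 * ρ / h) ≤ v.re) (x : ℝ)
    (hx : x ∈ Icc ((Real.sqrt (h ^ 2 - 2 * ρ * h + ρ ^ 2 * h ^ 2) - (1 - ρ * h)) / (h + 1))
                  ((Real.sqrt (h ^ 2 - 2 * ρ * h + ρ ^ 2 * h ^ 2) + (1 - ρ * h)) / (h + 1))) :
    h ≤ (1 - x ^ 2) / (1 - 2 * x * v.re + x ^ 2) := by
  obtain ⟨hx1, hx2⟩ := hx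
  have hh0 : (0:ℝ) < h := lt_of_lt_of_le one_pos hh1
  have hρh : ρ * h ≤ 1 / 2 := by
    rw [le_div_iff₀ (by positivity)] at hh2
    nlinarith
  set t := v.re with ht
  have ht1 : t ≤ 1 := by
    calc t ≤ |t| := le_abs_self _
    _ ≤ ‖v‖ := Complex.abs_re_le_norm v
    _ = 1 := hv
  set T := Real.sqrt (1 + ρ ^ 2 - 2 * ρ / h) with hT
  have hTnn : 0 ≤ T := Real.sqrt_nonneg _
  have harg : (0:ℝ) ≤ 1 + ρ ^ 2 - 2 * ρ / h := by
    have : 2 * ρ / h ≤ 2 * ρ := by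
      apply div_le_self (by positivity) hh1
    nlinarith
  have hT2 : T ^ 2 = 1 + ρ ^ 2 - 2 * ρ / h := Real.sq_sqrt harg
  set s := Real.sqrt (h ^ 2 - 2 * ρ * h + ρ ^ 2 * h ^ 2) with hs
  have hsnn : 0 ≤ s := Real.sqrt_nonneg _
  have hDnn : (0:ℝ) ≤ h ^ 2 - 2 * ρ * h + ρ ^ 2 * h ^ 2 := by nlinarith
  have hs2 : s ^ 2 = h ^ 2 - 2 * ρ * h + ρ ^ 2 * h ^ 2 := Real.sq_sqrt hDnn
  -- s = h * T
  have hsT : s = h * T := by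
    have h1 : (h * T) ^ 2 = h ^ 2 - 2 * ρ * h + ρ ^ 2 * h ^ 2 := by
      have : h * (2 * ρ / h) = 2 * ρ := by field_simp
      nlinarith [hT2]
    nlinarith [hs2, mul_nonneg hh0.le hTnn]
  -- s ≥ 1 - ρ h, so x ≥ 0
  have hs_ge : 1 - ρ * h ≤ s := by
    have hb : (0:ℝ) < s + (1 - ρ * h) := by linarith [hsnn, hρh]
    have hdiff : (s - (1 - ρ * h)) * (s + (1 - ρ * h)) = h ^ 2 - 1 := by
      linear_combination hs2
    nlinarith [hdiff, hb, hh1]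
  have hxnn : 0 ≤ x := by
    have : 0 ≤ (s - (1 - ρ * h)) / (h + 1) := by
      apply div_nonneg (by linarith) (by linarith)
    linarith
  -- x < 1
  have hxlt : x < 1 := by
    have hslt : s < h + ρ * h := by
      have ha : 0 < h + ρ * h := by nlinarith
      nlinarith [hs2, hsnn, mul_pos hρ0 hh0, mul_pos (mul_pos hρ0 hh0) hh0]
    have : (s + (1 - ρ * h)) / (h + 1) < 1 := by
      rw [div_lt_one (by linarith)]
      linarith
    linarith
  -- key quadratic inequality
  have hquad : (h + 1) * x ^ 2 - 2 * s * x + (h - 1) ≤ 0 := by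
    have h1 : x * (h + 1) - s ≤ 1 - ρ * h := by
      rw [le_div_iff₀ (by linarith : (0:ℝ) < h + 1)] at hx2; linarith
    have h2 : -(1 - ρ * h) ≤ x * (h + 1) - s := by
      rw [div_le_iff₀ (by linarith : (0:ℝ) < h + 1)] at hx1; linarith
    have hsq : (x * (h + 1) - s) ^ 2 ≤ (1 - ρ * h) ^ 2 := by nlinarith
    nlinarith [hs2, hh0]
  -- denominator positive
  have hd : 0 < 1 - 2 * x * t + x ^ 2 := by nlinarith [sq_nonneg (1 - x)]
  rw [le_div_iff₀ hd]
  have hTt : T ≤ t := hRe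
  nlinarith [mul_nonneg hxnn (sub_nonneg.mpr hTt), hsT]
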